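/- Define the sun product on monomials of ℝ[q,p][ν] by (q^{j₁}p^{k₁}) ⊙ (q^{j₂}p^{k₂}) = q^{j₁+j₂} ∗_M p^{k₁+k₂}, where ∗_M is the Moyal product on ℝ², extended bilinearly with the convention that it annihilates nonzero powers of ν. Then ⊙ is commutative and associative. -/

import Mathlib

noncomputable section

open MvPolynomial

/-- Polynomials ℝ[q,p], with `q = X 0` and `p = X 1`. -/
abbrev N : Type := MvPolynomial (Fin 2) ℝ

/-- The `r`-th power of the Poisson bidifferential operator
`P(f,g) = ∂f/∂p ∂g/∂q − ∂f/∂q ∂g/∂p` on ℝ²: a choice `c t = true` contributes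
`∂/∂p` on the left and `∂/∂q` on the right with sign `+1`, and `c t = false`
the opposite, with sign `−1`. -/
def Pr (r : ℕ) (f g : N) : N :=
  ∑ c : Fin r → Bool,
    (∏ t : Fin r, (if c t then (1 : ℝ) else -1)) •
      (((List.ofFn fun t => if c t then (1 : Fin 2) else 0).foldr
          (fun i h => pderiv i h) f)
        * ((List.ofFn fun t => if c t then (0 : Fin 2) else 1).foldr
          (fun i h => pderiv i h) g))

/-- The Moyal product `f ∗_M g = Σ_r (ν^r/r!) P^r(f,g)` as a power series in `ν`. -/
def moyal (f g : N) : PowerSeries N :=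
  PowerSeries.mk fun r => ((r.factorial : ℝ)⁻¹) • Pr r f g

/-- The sun product on `ℝ[q,p]`, defined on monomials by
`(q^{j₁}p^{k₁}) ⊙ (q^{j₂}p^{k₂}) = q^{j₁+j₂} ∗_M p^{k₁+k₂}` and extended
ℝ-bilinearly. -/
def sun0 (f g : N) : PowerSeries N :=
  ∑ a ∈ f.support, ∑ b ∈ g.support,
    (MvPolynomial.coeff a f * MvPolynomial.coeff b g) •
      moyal ((X 0 : N) ^ (a 0 + b 0)) ((X 1 : N) ^ (a 1 + b 1))

lemma pr_zero (f g : N) : Pr 0 f g = f * g := by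
  simp [Pr]

lemma support_one' : (1 : N).support = {0} := by
  rw [show (1 : N) = monomial 0 1 from rfl, support_monomial]
  simp

lemma monomial_eq' (m : Fin 2 →₀ ℕ) (c : ℝ) :
    (monomial m c : N) = c • ((X 0)^(m 0) * (X 1)^(m 1)) := by
  rw [monomial_eq, Finsupp.prod_fintype _ _ (fun i => pow_zero _), Fin.prod_univ_two,
    smul_eq_C_mul]

lemma sun0_eq_sum (f g : N) (s t : Finset (Fin 2 →₀ ℕ)) (hs : f.support ⊆ s)
    (ht : g.support ⊆ t) :
    sun0 f g = ∑ a ∈ s, ∑ b ∈ t,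
      (MvPolynomial.coeff a f * MvPolynomial.coeff b g) •
        moyal ((X 0 : N) ^ (a 0 + b 0)) ((X 1 : N) ^ (a 1 + b 1)) := by
  unfold sun0
  rw [Finset.sum_subset hs]
  · refine Finset.sum_congr rfl fun a _ => ?_
    refine Finset.sum_subset ht fun b _ hb => ?_
    simp [MvPolynomial.notMem_support_iff.mp hb]
  · intro a _ ha
    simp [MvPolynomial.notMem_support_iff.mp ha]

lemma sun0_add_left (f g h : N) : sun0 (f + g) h = sun0 f h + sun0 g h := by
  rw [sun0_eq_sum (f+g) h (f.support ∪ g.support) h.support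
      (MvPolynomial.support_add) (subset_refl _),
    sun0_eq_sum f h (f.support ∪ g.support) h.support Finset.subset_union_left (subset_refl _),
    sun0_eq_sum g h (f.support ∪ g.support) h.support Finset.subset_union_right (subset_refl _)]
  simp [MvPolynomial.coeff_add, add_mul, add_smul, Finset.sum_add_distrib]

lemma sun0_add_right (f g h : N) : sun0 f (g + h) = sun0 f g + sun0 f h := by
  rw [sun0_eq_sum f (g+h) f.support (g.support ∪ h.support) (subset_refl _)
      (MvPolynomial.support_add),
    sun0_eq_sum f g f.support (g.support ∪ h.support) (subset_refl _) Finset.subset_union_left,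
    sun0_eq_sum f h f.support (g.support ∪ h.support) (subset_refl _) Finset.subset_union_right]
  simp [MvPolynomial.coeff_add, mul_add, add_smul, Finset.sum_add_distrib]

lemma sun0_monomial (a b : Fin 2 →₀ ℕ) (c d : ℝ) :
    sun0 (monomial a c) (monomial b d)
      = (c * d) • moyal ((X 0 : N) ^ (a 0 + b 0)) ((X 1 : N) ^ (a 1 + b 1)) := by
  rcases eq_or_ne c 0 with rfl | hc
  · simp [sun0]
  rcases eq_or_ne d 0 with rfl | hd
  · simp [sun0]
  unfold sun0
  rw [support_monomial, support_monomial, if_neg hc, if_neg hd]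
  simp [coeff_monomial]

lemma key (f g : N) : sun0 f g = sun0 (f * g) 1 := by
  induction f using MvPolynomial.induction_on' with
  | add p q hp hq => rw [sun0_add_left, hp, hq, add_mul, sun0_add_left]
  | monomial a c =>
    induction g using MvPolynomial.induction_on' with
    | add p q hp hq => rw [sun0_add_right, hp, hq, mul_add, sun0_add_left]
    | monomial b d =>
      rw [monomial_mul, sun0_monomial,
        show (1 : N) = monomial 0 1 from rfl, sun0_monomial]
      simp

lemma constantCoeff_moyal (f g : N) :
    PowerSeries.constantCoeff (R := N) (moyal f g) = f * g := by
  have : PowerSeries.constantCoeff (R := N) (moyal f g) = ((Nat.factorial 0 : ℝ)⁻¹) • Pr 0 f g := by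
    simp [moyal, ← PowerSeries.coeff_zero_eq_constantCoeff]
  rw [this, pr_zero]
  simp

lemma constantCoeff_sun0_one (h : N) :
    PowerSeries.constantCoeff (R := N) (sun0 h 1) = h := by
  unfold sun0
  rw [support_one']
  rw [map_sum]
  conv_rhs => rw [h.as_sum]
  refine Finset.sum_congr rfl fun m hm => ?_
  rw [Finset.sum_singleton]
  have : PowerSeries.constantCoeff (R := N)
      ((MvPolynomial.coeff m h * MvPolynomial.coeff 0 (1:N)) •
        moyal ((X 0 : N) ^ (m 0 + (0 : Fin 2 →₀ ℕ) 0)) ((X 1 : N) ^ (m 1 + (0 : Fin 2 →₀ ℕ) 1)))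
      = (MvPolynomial.coeff m h * MvPolynomial.coeff 0 (1:N)) •
        ((X 0 : N) ^ (m 0 + (0 : Fin 2 →₀ ℕ) 0) * (X 1 : N) ^ (m 1 + (0 : Fin 2 →₀ ℕ) 1)) := by
    rw [← constantCoeff_moyal]; rfl
  rw [this, monomial_eq']
  simp

lemma constantCoeff_sun0 (f g : N) :
    PowerSeries.constantCoeff (R := N) (sun0 f g) = f * g := by
  rw [key, constantCoeff_sun0_one]

/-- The sun product on `ℝ[q,p][ν]`, annihilating nonzero powers of `ν`:
`A ⊙ B = A₀ ⊙ B₀`. -/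
def sun (A B : PowerSeries N) : PowerSeries N :=
  sun0 (PowerSeries.constantCoeff (R := N) A) (PowerSeries.constantCoeff (R := N) B)

/-- The sun product is commutative and associative. -/
theorem sun_comm_assoc :
    (∀ A B : PowerSeries N, sun A B = sun B A)
    ∧ (∀ A B C : PowerSeries N, sun (sun A B) C = sun A (sun B C)) := by
  constructor
  · intro A B
    unfold sun
    rw [key, mul_comm, ← key]
  · intro A B C
    unfold sun
    rw [constantCoeff_sun0, constantCoeff_sun0, key, mul_assoc, ← key]
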